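/- Let φ : ℝ → ℝ be monotonically increasing and applied componentwise. If u⁻ ≤ u ≤ u⁺ componentwise, then φ(W^- u⁺ + W^+ u⁻ + b) ≤ φ(W u + b) ≤ φ(W^- u⁻ + W^+ u⁺ + b) componentwise, where W^- and W^+ are the negative- and nonnegative-part matrices of W. -/
import Mathlib

open Matrix

/-- interval bounds for a single affine layer followed by a
monotone activation. -/
theorem monotone_activation_interval_bounds
    (m n : ℕ) (φ : ℝ → ℝ) (hφ : Monotone φ)
    (W : Matrix (Fin m) (Fin n) ℝ) (b : Fin m → ℝ)
    (Wneg Wpos : Matrix (Fin m) (Fin n) ℝ)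
    (hneg : ∀ i j, Wneg i j = min (W i j) 0)
    (hpos : ∀ i j, Wpos i j = max (W i j) 0)
    (ulo u uhi : Fin n → ℝ) (hlo : ulo ≤ u) (hhi : u ≤ uhi) :
    (fun i => φ ((Wneg *ᵥ uhi + Wpos *ᵥ ulo + b) i))
      ≤ (fun i => φ ((W *ᵥ u + b) i)) ∧
    (fun i => φ ((W *ᵥ u + b) i))
      ≤ (fun i => φ ((Wneg *ᵥ ulo + Wpos *ᵥ uhi + b) i)) := by
  have key : ∀ i, (Wneg *ᵥ uhi + Wpos *ᵥ ulo) i ≤ (W *ᵥ u) i ∧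
      (W *ᵥ u) i ≤ (Wneg *ᵥ ulo + Wpos *ᵥ uhi) i := by
    intro i
    simp only [Pi.add_apply, mulVec, dotProduct]
    constructor
    · rw [← Finset.sum_add_distrib]
      apply Finset.sum_le_sum
      intro j _
      rw [hneg, hpos]
      have h1 : min (W i j) 0 * uhi j ≤ min (W i j) 0 * u j :=
        mul_le_mul_of_nonpos_left (hhi j) (min_le_right _ _)
      have h2 : max (W i j) 0 * ulo j ≤ max (W i j) 0 * u j :=
        mul_le_mul_of_nonneg_left (hlo j) (le_max_right _ _)
      calc min (W i j) 0 * uhi j + max (W i j) 0 * ulo j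
          ≤ min (W i j) 0 * u j + max (W i j) 0 * u j := add_le_add h1 h2
        _ = W i j * u j := by rw [← add_mul, min_add_max]; ring
    · rw [← Finset.sum_add_distrib]
      apply Finset.sum_le_sum
      intro j _
      rw [hneg, hpos]
      have h1 : min (W i j) 0 * u j ≤ min (W i j) 0 * ulo j :=
        mul_le_mul_of_nonpos_left (hlo j) (min_le_right _ _)
      have h2 : max (W i j) 0 * u j ≤ max (W i j) 0 * uhi j :=
        mul_le_mul_of_nonneg_left (hhi j) (le_max_right _ _)
      calc W i j * u j = min (W i j) 0 * u j + max (W i j) 0 * u j := by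
            rw [← add_mul, min_add_max]; ring
        _ ≤ min (W i j) 0 * ulo j + max (W i j) 0 * uhi j := add_le_add h1 h2
  constructor
  · intro i
    exact hφ (by simpa using add_le_add_right (key i).1 (b i))
  · intro i
    exact hφ (by simpa using add_le_add_right (key i).2 (b i))
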